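/- Suppose G_L is connected, Ω is a nonempty finite set of routings, and all physical links have the same failure probability ρ with 0 ≤ ρ ≤ 1. Let k = min_{M∈Ω} |⋂_{τ} E_P(τ,M)|, the minimal number of physical links shared by the utilized link sets of all spanning trees, where τ ranges over all spanning trees of G_L. Then the maximal survivable probability of the cross-layer network satisfies max_{M∈Ω} ∏_{e∈R(M)}(1 − ρ) = (1 − ρ)^k. (Paper's Theorem 2.) -/

import Mathlib

section Aux
open SimpleGraph

lemma reachable_delete_of_reachable {V : Type*} (G : SimpleGraph V) {v w : V}
    (hr : (G \ SimpleGraph.fromEdgeSet {s(v,w)}).Reachable v w) :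
    ∀ {a b : V}, (p : G.Walk a b) → (G \ SimpleGraph.fromEdgeSet {s(v,w)}).Reachable a b := by
  intro a b p
  induction p with
  | nil => exact Reachable.refl _
  | @cons x y z hadj p ih =>
    by_cases hc : s(x, y) = s(v, w)
    · rw [Sym2.eq_iff] at hc
      rcases hc with ⟨rfl, rfl⟩ | ⟨rfl, rfl⟩
      · exact hr.trans ih
      · exact hr.symm.trans ih
    · have : (G \ SimpleGraph.fromEdgeSet {s(v,w)}).Adj x y := by
        rw [SimpleGraph.sdiff_adj, SimpleGraph.fromEdgeSet_adj]
        exact ⟨hadj, fun h => hc h.1⟩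
      exact this.reachable.trans ih

lemma exists_spanning_tree_aux {V : Type*} [Fintype V] :
    ∀ (n : ℕ) (H : SimpleGraph V), H.edgeSet.ncard ≤ n → H.Connected →
      ∃ τ, τ ≤ H ∧ τ.Connected ∧ τ.IsAcyclic := by
  intro n
  induction n with
  | zero =>
    intro H hcard hconn
    refine ⟨H, le_refl _, hconn, ?_⟩
    have hbot : H = ⊥ := SimpleGraph.edgeSet_eq_empty.mp
      (Set.ncard_eq_zero (Set.toFinite _) |>.mp (Nat.le_zero.mp hcard))
    subst hbot
    intro u c hc
    cases c with
    | nil => exact hc.ne_nil rfl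
    | cons h _ => simp at h
  | succ n ih =>
    intro H hcard hconn
    by_cases hac : H.IsAcyclic
    · exact ⟨H, le_refl _, hconn, hac⟩
    · rw [isAcyclic_iff_forall_adj_isBridge] at hac
      push_neg at hac
      obtain ⟨v, w, hadj, hbr⟩ := hac
      rw [SimpleGraph.isBridge_iff] at hbr
      push_neg at hbr
      have hr : (H \ SimpleGraph.fromEdgeSet {s(v,w)}).Reachable v w := hbr
      set H' := H \ SimpleGraph.fromEdgeSet {s(v,w)} with hH'
      have hconn' : H'.Connected := by
        haveI : Nonempty V := hconn.nonempty
        exact SimpleGraph.Connected.mk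
          (fun a b => reachable_delete_of_reachable H hr (hconn.preconnected a b).some)
      have hsub : H'.edgeSet ⊆ H.edgeSet := SimpleGraph.edgeSet_subset_edgeSet.mpr sdiff_le
      have hmem : s(v,w) ∈ H.edgeSet := hadj
      have hnot : s(v,w) ∉ H'.edgeSet := by
        simp [hH', SimpleGraph.edgeSet_sdiff]
      have hlt : H'.edgeSet.ncard < H.edgeSet.ncard := by
        refine Set.ncard_lt_ncard ?_ (Set.toFinite _)
        exact ⟨hsub, fun h => hnot (h hmem)⟩
      obtain ⟨τ, hτle, hτc, hτa⟩ := ih H' (by omega) hconn'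
      exact ⟨τ, hτle.trans sdiff_le, hτc, hτa⟩

lemma exists_spanning_tree {V : Type*} [Fintype V] (H : SimpleGraph V) (h : H.Connected) :
    ∃ τ, τ ≤ H ∧ τ.Connected ∧ τ.IsAcyclic :=
  exists_spanning_tree_aux H.edgeSet.ncard H le_rfl h


end Aux


/-- A spanning tree of the logical network `G`. -/
def IsSpanningTree {V_L : Type*} (G τ : SimpleGraph V_L) : Prop :=
  τ ≤ G ∧ τ.Connected ∧ τ.IsAcyclic

/-- The surviving graph `G∖e` after failure of the physical link `e`, under routing `M`. -/
def survivingGraph {V_L E_P : Type*} (G : SimpleGraph V_L) (M : Sym2 V_L → Set E_P)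
    (e : E_P) : SimpleGraph V_L :=
  SimpleGraph.fromEdgeSet {μ | μ ∈ G.edgeSet ∧ e ∉ M μ}

/-- `E_P(τ,M)`: the physical links utilized by the routing of the branches of `τ`. -/
def utilizedLinks {V_L E_P : Type*} (M : Sym2 V_L → Set E_P) (τ : SimpleGraph V_L) :
    Set E_P :=
  ⋃ μ ∈ τ.edgeSet, M μ

/-- `R(M)`: the physical links whose individual failure disconnects the logical network. -/
def disconnectingLinks {V_L E_P : Type*} (G : SimpleGraph V_L)
    (M : Sym2 V_L → Set E_P) : Set E_P :=
  {e | ¬ (survivingGraph G M e).Connected}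

/-- The survivable probability of a set `S` of physical links: `∏_{e ∈ S} (1 - ρ e)`. -/
noncomputable def survProb {E_P : Type*} [Fintype E_P] (ρ : E_P → ℝ) (S : Set E_P) : ℝ :=
  ∏ e ∈ (Set.toFinite S).toFinset, (1 - ρ e)

section Aux2
open SimpleGraph

lemma disconnecting_eq {V_L E_P : Type*} [Fintype V_L]
    (G : SimpleGraph V_L) (hG : G.Connected) (M : Sym2 V_L → Set E_P) :
    disconnectingLinks G M = ⋂ τ, ⋂ (_ : IsSpanningTree G τ), utilizedLinks M τ := by
  ext e
  simp only [disconnectingLinks, Set.mem_setOf_eq, Set.mem_iInter]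
  constructor
  · intro hnc τ hτ
    by_contra he
    apply hnc
    have hle : τ ≤ survivingGraph G M e := by
      rw [← SimpleGraph.edgeSet_subset_edgeSet]
      intro μ hμ
      rw [survivingGraph, SimpleGraph.edgeSet_fromEdgeSet]
      refine ⟨⟨SimpleGraph.edgeSet_subset_edgeSet.mpr hτ.1 hμ, ?_⟩, ?_⟩
      · intro hmem
        exact he (Set.mem_biUnion hμ hmem)
      · exact SimpleGraph.not_isDiag_of_mem_edgeSet τ hμ
    exact hτ.2.1.mono hle
  · intro h hnc
    obtain ⟨τ, hle, hc, ha⟩ := exists_spanning_tree _ hnc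
    have hsle : survivingGraph G M e ≤ G := by
      rw [← SimpleGraph.edgeSet_subset_edgeSet]
      rw [survivingGraph, SimpleGraph.edgeSet_fromEdgeSet]
      intro μ hμ
      exact hμ.1.1
    have := h τ ⟨hle.trans hsle, hc, ha⟩
    rw [utilizedLinks, Set.mem_iUnion₂] at this
    obtain ⟨μ, hμ, hem⟩ := this
    have : μ ∈ (survivingGraph G M e).edgeSet := SimpleGraph.edgeSet_subset_edgeSet.mpr hle hμ
    rw [survivingGraph, SimpleGraph.edgeSet_fromEdgeSet] at this
    exact this.1.2 hem


end Aux2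

/-- Paper's Theorem 2: under unified link failure probability `ρ`, the maximal
survivable probability of the cross-layer network equals `(1-ρ)^k`, where `k` is the
minimal number of physical links shared by the utilized link sets of all spanning trees. -/
theorem max_survivable_probability_eq_pow_min_shared_links
    {V_L E_P : Type*} [Fintype V_L] [Fintype E_P]
    (G_L : SimpleGraph V_L) (hG : G_L.Connected)
    (Ω : Finset (Sym2 V_L → Set E_P)) (hΩ : Ω.Nonempty)
    (ρ : ℝ) (hρ0 : 0 ≤ ρ) (hρ1 : ρ ≤ 1) :
    Ω.sup' hΩ (fun M => survProb (fun _ => ρ) (disconnectingLinks G_L M)) =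
      (1 - ρ) ^ Ω.inf' hΩ (fun M =>
        (⋂ τ, ⋂ (_ : IsSpanningTree G_L τ), utilizedLinks M τ).ncard) := by
  have hval : ∀ M : Sym2 V_L → Set E_P, survProb (fun _ => ρ) (disconnectingLinks G_L M) =
      (1 - ρ) ^ ((⋂ τ, ⋂ (_ : IsSpanningTree G_L τ), utilizedLinks M τ).ncard) := by
    intro M
    rw [survProb, Finset.prod_const, ← disconnecting_eq G_L hG M]
    congr 1
    exact (Set.ncard_eq_toFinset_card _ (Set.toFinite _)).symm
  have h0 : 0 ≤ 1 - ρ := by linarith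
  have h1 : 1 - ρ ≤ 1 := by linarith
  apply le_antisymm
  · apply Finset.sup'_le
    intro M hM
    rw [hval M]
    exact pow_le_pow_of_le_one h0 h1 (Finset.inf'_le _ hM)
  · obtain ⟨M0, hM0, heq⟩ := Finset.exists_mem_eq_inf' hΩ
      (fun M => (⋂ τ, ⋂ (_ : IsSpanningTree G_L τ), utilizedLinks M τ).ncard)
    rw [heq, ← hval M0]
    exact Finset.le_sup' (fun M => survProb (fun _ => ρ) (disconnectingLinks G_L M)) hM0
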